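/- arXiv:2409.07201 — 4 statements merged into one kernel-verified Lean document; each statement's English description precedes it below -/
import Mathlib

section
/- Let G = (V, E) be a finite simple graph with m ≥ 1 edges, let w_2 > 2, and let α be an integer with α ≥ m·w_2 + 1. Construct the hypergraph H whose vertex set is V together with new vertices s_1, …, s_α and t_1, …, t_α, and whose hyperedges are: all 2-element subsets of {s_1, …, s_α}, all 2-element subsets of {t_1, …, t_α}, and for each edge {x, y} ∈ E the two hyperedges {s_1, s_2, x, y} and {t_1, t_2, x, y}. Then the minimum, over all cuts S* with s_1 ∈ S* and t_1 ∉ S*, of the cardinality-based cost of S* (weights w_0 = 0, w_1 = 1, w_2) equals m·w_2 + (2 − w_2)·mc(G), where mc(G) is the maximum, over all subsets U ⊆ V, of the number of edges of G with exactly one endpoint in U. -/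
set_option linter.unusedSectionVars false

/-- The split value of a hyperedge `e` with respect to a cut `S`:
`min (|e ∩ S|, |e \ S|)`. -/
def splitVal {W : Type*} [DecidableEq W] (S e : Finset W) : ℕ :=
  min (e ∩ S).card (e \ S).card

/-- The vertex set of the constructed hypergraph: the original vertices `V`
together with `s`-vertices and `t`-vertices (indexed by naturals). -/
abbrev Vtx (V : Type*) := V ⊕ ℕ ⊕ ℕ

/-- The vertex `s_i`. -/
def sV {V : Type*} (i : ℕ) : Vtx V := Sum.inr (Sum.inl i)

/-- The vertex `t_i`. -/
def tV {V : Type*} (i : ℕ) : Vtx V := Sum.inr (Sum.inr i)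

/-- The set `{s_1, …, s_j}`. -/
def sSet (V : Type*) [DecidableEq V] (j : ℕ) : Finset (Vtx V) := (Finset.Icc 1 j).image sV

/-- The set `{t_1, …, t_j}`. -/
def tSet (V : Type*) [DecidableEq V] (j : ℕ) : Finset (Vtx V) := (Finset.Icc 1 j).image tV

/-- The two endpoints of a graph edge, as a `Finset`. -/
def pairFinset {V : Type*} [DecidableEq V] (e : Sym2 V) : Finset V :=
  Sym2.lift ⟨fun x y => ({x, y} : Finset V), fun _ _ => Finset.pair_comm _ _⟩ e

/-- The image `{x, y}` (inside `Vtx V`) of a graph edge `{x, y}`. -/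
def edgeImg {V : Type*} [DecidableEq V] (e : Sym2 V) : Finset (Vtx V) :=
  (pairFinset e).image Sum.inl

/-- The hyperedge family of the hypergraph `H` built from the graph `G`:
all 2-element subsets of `{s_1,…,s_α}`, all 2-element subsets of `{t_1,…,t_α}`,
and for each edge `{x,y}` of `G` the hyperedges `{s_1,s_2,x,y}` and `{t_1,t_2,x,y}`. -/
def H0 {V : Type*} [Fintype V] [DecidableEq V] (G : SimpleGraph V) [DecidableRel G.Adj]
    (α : ℕ) : Finset (Finset (Vtx V)) :=
  (sSet V α).powersetCard 2 ∪ (tSet V α).powersetCard 2 ∪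
    G.edgeFinset.image (fun e => sSet V 2 ∪ edgeImg e) ∪
    G.edgeFinset.image (fun e => tSet V 2 ∪ edgeImg e)

/-- The maximum cut value of `G`: the maximum over subsets `U` of the vertex set
of the number of edges with exactly one endpoint in `U`. -/
def maxCut {V : Type*} [Fintype V] [DecidableEq V] (G : SimpleGraph V)
    [DecidableRel G.Adj] : ℕ :=
  Finset.univ.sup fun U : Finset V =>
    (G.edgeFinset.filter (fun e => (pairFinset e ∩ U).card = 1)).card

section helpers

variable {V : Type*} [DecidableEq V]

@[simp] lemma sV_inj {i j : ℕ} : (sV i : Vtx V) = sV j ↔ i = j := by simp [sV]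
@[simp] lemma tV_inj {i j : ℕ} : (tV i : Vtx V) = tV j ↔ i = j := by simp [tV]
@[simp] lemma sV_ne_tV {i j : ℕ} : (sV i : Vtx V) ≠ tV j := by simp [sV, tV]
@[simp] lemma tV_ne_sV {i j : ℕ} : (tV i : Vtx V) ≠ sV j := by simp [sV, tV]
@[simp] lemma inl_ne_sV {v : V} {i : ℕ} : (Sum.inl v : Vtx V) ≠ sV i := by simp [sV]
@[simp] lemma inl_ne_tV {v : V} {i : ℕ} : (Sum.inl v : Vtx V) ≠ tV i := by simp [tV]
@[simp] lemma sV_ne_inl {v : V} {i : ℕ} : (sV i : Vtx V) ≠ Sum.inl v := by simp [sV]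
@[simp] lemma tV_ne_inl {v : V} {i : ℕ} : (tV i : Vtx V) ≠ Sum.inl v := by simp [tV]

@[simp] lemma mem_sSet {x : Vtx V} {j : ℕ} : x ∈ sSet V j ↔ ∃ i, 1 ≤ i ∧ i ≤ j ∧ x = sV i := by
  simp [sSet, eq_comm, and_assoc]
@[simp] lemma mem_tSet {x : Vtx V} {j : ℕ} : x ∈ tSet V j ↔ ∃ i, 1 ≤ i ∧ i ≤ j ∧ x = tV i := by
  simp [tSet, eq_comm, and_assoc]

lemma sSet_two : sSet V 2 = {sV 1, sV 2} := by
  have : Finset.Icc 1 2 = ({1, 2} : Finset ℕ) := by decide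
  simp [sSet, this]
lemma tSet_two : tSet V 2 = {tV 1, tV 2} := by
  have : Finset.Icc 1 2 = ({1, 2} : Finset ℕ) := by decide
  simp [tSet, this]

@[simp] lemma pairFinset_mk (x y : V) : pairFinset s(x, y) = {x, y} := rfl

lemma pairFinset_injective : Function.Injective (pairFinset (V := V)) := by
  intro e e' h
  induction e using Sym2.ind with
  | _ x y =>
    induction e' using Sym2.ind with
    | _ x' y' =>
      simp only [pairFinset_mk] at h
      have hx : x ∈ ({x', y'} : Finset V) := by rw [← h]; simp
      have hy : y ∈ ({x', y'} : Finset V) := by rw [← h]; simp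
      have hx' : x' ∈ ({x, y} : Finset V) := by rw [h]; simp
      have hy' : y' ∈ ({x, y} : Finset V) := by rw [h]; simp
      simp only [Finset.mem_insert, Finset.mem_singleton] at hx hy hx' hy'
      rw [Sym2.eq_iff]
      rcases hx with rfl | rfl <;> rcases hy with rfl | rfl <;> tauto

lemma edgeImg_injective : Function.Injective (edgeImg (V := V)) := by
  intro e e' h
  exact pairFinset_injective (Finset.image_injective Sum.inl_injective h)

lemma splitVal_of_subset {S e : Finset (Vtx V)} (h : e ⊆ S) : splitVal S e = 0 := by
  simp [splitVal, Finset.sdiff_eq_empty_iff_subset.2 h]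

lemma splitVal_of_disj {S e : Finset (Vtx V)} (h : ∀ x ∈ e, x ∉ S) : splitVal S e = 0 := by
  have : e ∩ S = ∅ := Finset.eq_empty_of_forall_notMem
    (by intro a ha; simp only [Finset.mem_inter] at ha; exact h a ha.1 ha.2)
  simp [splitVal, this]

lemma C_eq (x y : V) : sSet V 2 ∪ edgeImg s(x,y) = {sV 1, sV 2, Sum.inl x, Sum.inl y} := by
  rw [sSet_two]; ext z; simp only [Finset.mem_union, Finset.mem_insert, Finset.mem_singleton,
    edgeImg, Finset.mem_image, pairFinset_mk]; aesop

lemma D_eq (x y : V) : tSet V 2 ∪ edgeImg s(x,y) = {tV 1, tV 2, Sum.inl x, Sum.inl y} := by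
  rw [tSet_two]; ext z; simp only [Finset.mem_union, Finset.mem_insert, Finset.mem_singleton,
    edgeImg, Finset.mem_image, pairFinset_mk]; aesop

lemma filter_mem (e : Finset (Vtx V)) (S : Finset (Vtx V)) :
    splitVal S e = min (e.filter (· ∈ S)).card (e.filter (· ∉ S)).card := by
  rw [splitVal, Finset.sdiff_eq_filter, Finset.filter_mem_eq_inter.symm]

lemma splitVal_pair {S : Finset (Vtx V)} {u v : Vtx V} (hu : u ∈ S) (hv : v ∉ S) :
    splitVal S ({u, v} : Finset (Vtx V)) = 1 := by
  rw [filter_mem]; simp [Finset.filter_insert, Finset.filter_singleton, hu, hv]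

lemma two_mul_splitVal_le (S e : Finset (Vtx V)) : 2 * splitVal S e ≤ e.card := by
  have h := Finset.card_inter_add_card_sdiff e S
  have h1 : splitVal S e ≤ (e ∩ S).card := min_le_left _ _
  have h2 : splitVal S e ≤ (e \ S).card := min_le_right _ _
  omega

lemma edge_cost (w : ℕ → ℝ) (hw0 : w 0 = 0) (hw1 : w 1 = 1)
    (S : Finset (Vtx V)) (U : Finset V) (hU : ∀ v, Sum.inl v ∈ S ↔ v ∈ U)
    (hs1 : (sV 1 : Vtx V) ∈ S) (hs2 : (sV 2 : Vtx V) ∈ S)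
    (ht1 : (tV 1 : Vtx V) ∉ S) (ht2 : (tV 2 : Vtx V) ∉ S)
    (x y : V) (hxy : x ≠ y) :
    w (splitVal S (sSet V 2 ∪ edgeImg s(x,y))) + w (splitVal S (tSet V 2 ∪ edgeImg s(x,y)))
      = if (pairFinset s(x,y) ∩ U).card = 1 then 2 else w 2 := by
  rw [C_eq, D_eq, filter_mem, filter_mem]
  have hcard : (pairFinset s(x,y) ∩ U).card = (({x,y} : Finset V).filter (· ∈ U)).card := by
    rw [pairFinset_mk, Finset.filter_mem_eq_inter]
  rw [hcard]
  by_cases hx : x ∈ U <;> by_cases hy : y ∈ U <;>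
    simp [Finset.filter_insert, Finset.filter_singleton, hU, hx, hy, hs1, hs2, ht1, ht2,
      Finset.card_insert_of_notMem, hxy, Ne.symm hxy, hw0, hw1] <;> norm_num

lemma clique_lb (g : ℕ → Vtx V) (hg : Function.Injective g)
    (α a b : ℕ) (ha1 : 1 ≤ a) (haα : a ≤ α) (hb1 : 1 ≤ b) (hbα : b ≤ α) (hab : a ≠ b)
    (S : Finset (Vtx V)) (hga : g a ∈ S) (hgb : g b ∉ S)
    (w : ℕ → ℝ) (hw0 : w 0 = 0) (hw1 : w 1 = 1) :
    (α : ℝ) - 1 ≤ ∑ p ∈ ((Finset.Icc 1 α).image g).powersetCard 2, w (splitVal S p) := by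
  classical
  set I := Finset.Icc 1 α \ {b} with hI
  set f : ℕ → Finset (Vtx V) := fun i => if g i ∈ S then {g i, g b} else {g a, g i} with hf
  have hbI : b ∈ Finset.Icc 1 α := Finset.mem_Icc.2 ⟨hb1, hbα⟩
  have haI : a ∈ Finset.Icc 1 α := Finset.mem_Icc.2 ⟨ha1, haα⟩
  have hmem : ∀ i ∈ I, f i ∈ ((Finset.Icc 1 α).image g).powersetCard 2
      ∧ w (splitVal S (f i)) = 1 := by
    intro i hi
    rw [hI, Finset.mem_sdiff, Finset.mem_singleton] at hi
    obtain ⟨hiI, hib⟩ := hi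
    by_cases hiS : g i ∈ S
    · have hne : g i ≠ g b := fun h => hib (hg h)
      have hsub : ({g i, g b} : Finset (Vtx V)) ⊆ (Finset.Icc 1 α).image g := by
        intro z hz; rcases Finset.mem_insert.1 hz with rfl | hz
        · exact Finset.mem_image_of_mem g hiI
        · rw [Finset.mem_singleton.1 hz]; exact Finset.mem_image_of_mem g hbI
      have hcard : ({g i, g b} : Finset (Vtx V)).card = 2 := by
        rw [Finset.card_insert_of_notMem (by simpa using hne)]; simp
      refine ⟨?_, ?_⟩
      · simp only [hf, if_pos hiS]; exact Finset.mem_powersetCard.2 ⟨hsub, hcard⟩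
      · simp only [hf, if_pos hiS]; rw [splitVal_pair hiS hgb, hw1]
    · have hne : g a ≠ g i := fun h => hiS (h ▸ hga)
      have hsub : ({g a, g i} : Finset (Vtx V)) ⊆ (Finset.Icc 1 α).image g := by
        intro z hz; rcases Finset.mem_insert.1 hz with rfl | hz
        · exact Finset.mem_image_of_mem g haI
        · rw [Finset.mem_singleton.1 hz]; exact Finset.mem_image_of_mem g hiI
      have hcard : ({g a, g i} : Finset (Vtx V)).card = 2 := by
        rw [Finset.card_insert_of_notMem (by simpa using hne)]; simp
      refine ⟨?_, ?_⟩
      · simp only [hf, if_neg hiS]; exact Finset.mem_powersetCard.2 ⟨hsub, hcard⟩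
      · simp only [hf, if_neg hiS]; rw [splitVal_pair hga hiS, hw1]
  have hinj : ∀ i ∈ I, ∀ i' ∈ I, f i = f i' → i = i' := by
    intro i hi i' hi' h
    rw [hI, Finset.mem_sdiff, Finset.mem_singleton] at hi hi'
    by_cases hiS : g i ∈ S <;> by_cases hi'S : g i' ∈ S <;>
      simp only [hf, if_pos, if_neg, hiS, hi'S, if_true, if_false] at h
    · have : g i ∈ ({g i', g b} : Finset (Vtx V)) := by rw [← h]; simp
      rcases Finset.mem_insert.1 this with h' | h'
      · exact hg h'
      · exact absurd (hg (Finset.mem_singleton.1 h')) hi.2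
    · have : g b ∈ ({g a, g i'} : Finset (Vtx V)) := by rw [← h]; simp
      rcases Finset.mem_insert.1 this with h' | h'
      · exact absurd (hg h').symm hab
      · exact absurd (hg (Finset.mem_singleton.1 h')) (Ne.symm hi'.2)
    · have : g b ∈ ({g a, g i} : Finset (Vtx V)) := by rw [h]; simp
      rcases Finset.mem_insert.1 this with h' | h'
      · exact absurd (hg h').symm hab
      · exact absurd (hg (Finset.mem_singleton.1 h')) (Ne.symm hi.2)
    · have : g i ∈ ({g a, g i'} : Finset (Vtx V)) := by rw [← h]; simp
      rcases Finset.mem_insert.1 this with h' | h'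
      · exact absurd (hg h' ▸ hga) hiS
      · exact hg (Finset.mem_singleton.1 h')
  have hIcard : I.card = α - 1 := by
    rw [hI, Finset.card_sdiff_of_subset (Finset.singleton_subset_iff.2 hbI), Nat.card_Icc]
    simp
  have h1 : ∑ p ∈ I.image f, w (splitVal S p) = (α : ℝ) - 1 := by
    rw [Finset.sum_image hinj, Finset.sum_congr rfl (fun i hi => (hmem i hi).2),
      Finset.sum_const, hIcard, nsmul_eq_mul, mul_one]
    have : 1 ≤ α := le_trans ha1 haα
    push_cast [this]
    ring
  rw [← h1]
  apply Finset.sum_le_sum_of_subset_of_nonneg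
  · intro p hp
    obtain ⟨i, hi, rfl⟩ := Finset.mem_image.1 hp
    exact (hmem i hi).1
  · intro p hp _
    have hc : p.card = 2 := (Finset.mem_powersetCard.1 hp).2
    have h := two_mul_splitVal_le S p
    rw [hc] at h
    rcases (show splitVal S p = 0 ∨ splitVal S p = 1 by omega) with h' | h' <;>
      rw [h'] <;> simp [hw0, hw1]

variable [Fintype V] (G : SimpleGraph V) [DecidableRel G.Adj]

lemma edge_repr {e : Sym2 V} (he : e ∈ G.edgeFinset) : ∃ x y : V, x ≠ y ∧ e = s(x, y) := by
  induction e using Sym2.ind with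
  | _ x y =>
    rw [SimpleGraph.mem_edgeFinset, SimpleGraph.mem_edgeSet] at he
    exact ⟨x, y, G.ne_of_adj he, rfl⟩

lemma H0_card_le (α : ℕ) : ∀ e ∈ H0 G α, e.card ≤ 4 := by
  intro p hp
  rw [H0, Finset.mem_union, Finset.mem_union, Finset.mem_union] at hp
  have h4 : ∀ a b c d : Vtx V, ({a, b, c, d} : Finset (Vtx V)).card ≤ 4 := by
    intro a b c d
    have h1 := Finset.card_insert_le a ({b, c, d} : Finset (Vtx V))
    have h2 := Finset.card_insert_le b ({c, d} : Finset (Vtx V))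
    have h3 := Finset.card_insert_le c ({d} : Finset (Vtx V))
    have h0 : ({d} : Finset (Vtx V)).card = 1 := Finset.card_singleton d
    omega
  rcases hp with ((h | h) | h) | h
  · rw [(Finset.mem_powersetCard.1 h).2]; omega
  · rw [(Finset.mem_powersetCard.1 h).2]; omega
  · obtain ⟨e, he, rfl⟩ := Finset.mem_image.1 h
    obtain ⟨x, y, hxy, rfl⟩ := edge_repr G he
    rw [C_eq]; exact h4 _ _ _ _
  · obtain ⟨e, he, rfl⟩ := Finset.mem_image.1 h
    obtain ⟨x, y, hxy, rfl⟩ := edge_repr G he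
    rw [D_eq]; exact h4 _ _ _ _

lemma keySum (α : ℕ) (hα2 : 2 ≤ α)
    (w : ℕ → ℝ) (hw0 : w 0 = 0) (hw1 : w 1 = 1)
    (S : Finset (Vtx V)) (U : Finset V) (hU : ∀ v, Sum.inl v ∈ S ↔ v ∈ U)
    (hS : ∀ i, 1 ≤ i → i ≤ α → (sV i : Vtx V) ∈ S)
    (hT : ∀ i, 1 ≤ i → i ≤ α → (tV i : Vtx V) ∉ S) :
    ∑ e ∈ H0 G α, w (splitVal S e)
      = (G.edgeFinset.card : ℝ) * w 2 + (2 - w 2) *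
        ((G.edgeFinset.filter (fun e => (pairFinset e ∩ U).card = 1)).card : ℝ) := by
  have hs1 : (sV 1 : Vtx V) ∈ S := hS 1 le_rfl (by omega)
  have hs2 : (sV 2 : Vtx V) ∈ S := hS 2 (by omega) hα2
  have ht1 : (tV 1 : Vtx V) ∉ S := hT 1 le_rfl (by omega)
  have ht2 : (tV 2 : Vtx V) ∉ S := hT 2 (by omega) hα2
  have hAB : Disjoint ((sSet V α).powersetCard 2) ((tSet V α).powersetCard 2) := by
    rw [Finset.disjoint_left]
    intro p hpA hpB
    rw [Finset.mem_powersetCard] at hpA hpB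
    obtain ⟨z, hz⟩ := Finset.card_pos.1 (by rw [hpA.2]; norm_num)
    obtain ⟨i, _, _, rfl⟩ := mem_sSet.1 (hpA.1 hz)
    obtain ⟨j, _, _, h⟩ := mem_tSet.1 (hpB.1 hz)
    exact sV_ne_tV h
  have hmemC : ∀ p ∈ G.edgeFinset.image (fun e => sSet V 2 ∪ edgeImg e),
      (sV 1 : Vtx V) ∈ p ∧ ∃ v : V, Sum.inl v ∈ p := by
    intro p hp
    obtain ⟨e, he, rfl⟩ := Finset.mem_image.1 hp
    obtain ⟨x, y, hxy, rfl⟩ := edge_repr G he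
    rw [C_eq]
    exact ⟨by simp, x, by simp⟩
  have hmemD : ∀ p ∈ G.edgeFinset.image (fun e => tSet V 2 ∪ edgeImg e),
      (tV 1 : Vtx V) ∈ p ∧ (sV 1 : Vtx V) ∉ p ∧ ∃ v : V, Sum.inl v ∈ p := by
    intro p hp
    obtain ⟨e, he, rfl⟩ := Finset.mem_image.1 hp
    obtain ⟨x, y, hxy, rfl⟩ := edge_repr G he
    rw [D_eq]
    exact ⟨by simp, by simp, x, by simp⟩
  have hABC : Disjoint ((sSet V α).powersetCard 2 ∪ (tSet V α).powersetCard 2)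
      (G.edgeFinset.image (fun e => sSet V 2 ∪ edgeImg e)) := by
    rw [Finset.disjoint_right]
    intro p hp hp'
    obtain ⟨-, v, hv⟩ := hmemC p hp
    rcases Finset.mem_union.1 hp' with h | h <;> rw [Finset.mem_powersetCard] at h
    · obtain ⟨i, _, _, hi⟩ := mem_sSet.1 (h.1 hv); exact inl_ne_sV hi
    · obtain ⟨i, _, _, hi⟩ := mem_tSet.1 (h.1 hv); exact inl_ne_tV hi
  have hABCD : Disjoint ((sSet V α).powersetCard 2 ∪ (tSet V α).powersetCard 2 ∪
      G.edgeFinset.image (fun e => sSet V 2 ∪ edgeImg e))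
      (G.edgeFinset.image (fun e => tSet V 2 ∪ edgeImg e)) := by
    rw [Finset.disjoint_right]
    intro p hp hp'
    obtain ⟨ht, hs, v, hv⟩ := hmemD p hp
    rcases Finset.mem_union.1 hp' with h | h
    · rcases Finset.mem_union.1 h with h' | h' <;> rw [Finset.mem_powersetCard] at h'
      · obtain ⟨i, _, _, hi⟩ := mem_sSet.1 (h'.1 hv); exact inl_ne_sV hi
      · obtain ⟨i, _, _, hi⟩ := mem_tSet.1 (h'.1 hv); exact inl_ne_tV hi
    · exact hs (hmemC p h).1
  rw [H0, Finset.sum_union hABCD, Finset.sum_union hABC, Finset.sum_union hAB]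
  have hsumA : ∑ p ∈ (sSet V α).powersetCard 2, w (splitVal S p) = 0 := by
    apply Finset.sum_eq_zero
    intro p hp
    rw [Finset.mem_powersetCard] at hp
    have : p ⊆ S := fun z hz => by
      obtain ⟨i, h1, h2, rfl⟩ := mem_sSet.1 (hp.1 hz); exact hS i h1 h2
    rw [splitVal_of_subset this, hw0]
  have hsumB : ∑ p ∈ (tSet V α).powersetCard 2, w (splitVal S p) = 0 := by
    apply Finset.sum_eq_zero
    intro p hp
    rw [Finset.mem_powersetCard] at hp
    have : ∀ z ∈ p, z ∉ S := fun z hz => by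
      obtain ⟨i, h1, h2, rfl⟩ := mem_tSet.1 (hp.1 hz); exact hT i h1 h2
    rw [splitVal_of_disj this, hw0]
  rw [hsumA, hsumB]
  have hinjC : ∀ e ∈ G.edgeFinset, ∀ e' ∈ G.edgeFinset,
      sSet V 2 ∪ edgeImg e = sSet V 2 ∪ edgeImg e' → e = e' := by
    intro e he e' he' h
    apply edgeImg_injective
    have d1 : Disjoint (sSet V 2) (edgeImg e) := by
      rw [Finset.disjoint_left]; intro z hz hz'
      obtain ⟨i, _, _, rfl⟩ := mem_sSet.1 hz
      obtain ⟨v, _, hv⟩ := Finset.mem_image.1 hz'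
      exact inl_ne_sV hv
    have d2 : Disjoint (sSet V 2) (edgeImg e') := by
      rw [Finset.disjoint_left]; intro z hz hz'
      obtain ⟨i, _, _, rfl⟩ := mem_sSet.1 hz
      obtain ⟨v, _, hv⟩ := Finset.mem_image.1 hz'
      exact inl_ne_sV hv
    calc edgeImg e = (sSet V 2 ∪ edgeImg e) \ sSet V 2 := (Finset.union_sdiff_cancel_left d1).symm
      _ = (sSet V 2 ∪ edgeImg e') \ sSet V 2 := by rw [h]
      _ = edgeImg e' := Finset.union_sdiff_cancel_left d2
  have hinjD : ∀ e ∈ G.edgeFinset, ∀ e' ∈ G.edgeFinset,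
      tSet V 2 ∪ edgeImg e = tSet V 2 ∪ edgeImg e' → e = e' := by
    intro e he e' he' h
    apply edgeImg_injective
    have d1 : Disjoint (tSet V 2) (edgeImg e) := by
      rw [Finset.disjoint_left]; intro z hz hz'
      obtain ⟨i, _, _, rfl⟩ := mem_tSet.1 hz
      obtain ⟨v, _, hv⟩ := Finset.mem_image.1 hz'
      exact inl_ne_tV hv
    have d2 : Disjoint (tSet V 2) (edgeImg e') := by
      rw [Finset.disjoint_left]; intro z hz hz'
      obtain ⟨i, _, _, rfl⟩ := mem_tSet.1 hz
      obtain ⟨v, _, hv⟩ := Finset.mem_image.1 hz'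
      exact inl_ne_tV hv
    calc edgeImg e = (tSet V 2 ∪ edgeImg e) \ tSet V 2 := (Finset.union_sdiff_cancel_left d1).symm
      _ = (tSet V 2 ∪ edgeImg e') \ tSet V 2 := by rw [h]
      _ = edgeImg e' := Finset.union_sdiff_cancel_left d2
  rw [Finset.sum_image hinjC, Finset.sum_image hinjD]
  rw [zero_add, zero_add, ← Finset.sum_add_distrib]
  have hcost : ∀ e ∈ G.edgeFinset,
      w (splitVal S (sSet V 2 ∪ edgeImg e)) + w (splitVal S (tSet V 2 ∪ edgeImg e))
        = if (pairFinset e ∩ U).card = 1 then 2 else w 2 := by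
    intro e he
    obtain ⟨x, y, hxy, rfl⟩ := edge_repr G he
    exact edge_cost w hw0 hw1 S U hU hs1 hs2 ht1 ht2 x y hxy
  rw [Finset.sum_congr rfl hcost, Finset.sum_ite, Finset.sum_const, Finset.sum_const]
  set c := (G.edgeFinset.filter (fun e => (pairFinset e ∩ U).card = 1)).card with hc
  have hsplit : c + (G.edgeFinset.filter (fun e => ¬ (pairFinset e ∩ U).card = 1)).card
      = G.edgeFinset.card := Finset.card_filter_add_card_filter_not _
  set d := (G.edgeFinset.filter (fun e => ¬ (pairFinset e ∩ U).card = 1)).card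
  have hd : (d : ℝ) = (G.edgeFinset.card : ℝ) - c := by
    have := congrArg (Nat.cast (R := ℝ)) hsplit; push_cast at this; linarith
  rw [nsmul_eq_mul, nsmul_eq_mul, hd]
  ring

end helpers

theorem stmt1 {V : Type*} [Fintype V] [DecidableEq V]
    (G : SimpleGraph V) [DecidableRel G.Adj]
    (m : ℕ) (hm : m = G.edgeFinset.card) (hm1 : 1 ≤ m)
    (w : ℕ → ℝ) (hw0 : w 0 = 0) (hw1 : w 1 = 1) (hw2 : 2 < w 2)
    (α : ℕ) (hα : (m : ℝ) * w 2 + 1 ≤ (α : ℝ)) :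
    IsLeast {x : ℝ | ∃ S : Finset (Vtx V), sV 1 ∈ S ∧ tV 1 ∉ S ∧
        x = ∑ e ∈ H0 G α, w (splitVal S e)}
      ((m : ℝ) * w 2 + (2 - w 2) * (maxCut G : ℝ)) := by
  have hm1' : (1 : ℝ) ≤ (m : ℝ) := by exact_mod_cast hm1
  have hα3 : (3 : ℝ) < (α : ℝ) := by nlinarith
  have hα2 : 2 ≤ α := by
    have : (2 : ℝ) ≤ (α : ℝ) := by linarith
    exact_mod_cast this
  constructor
  · -- the value is attained
    obtain ⟨U, -, hUmax⟩ := Finset.exists_mem_eq_sup (Finset.univ : Finset (Finset V))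
      ⟨∅, Finset.mem_univ ∅⟩
      (fun U : Finset V => (G.edgeFinset.filter (fun e => (pairFinset e ∩ U).card = 1)).card)
    refine ⟨sSet V α ∪ U.image Sum.inl, ?_, ?_, ?_⟩
    · exact Finset.mem_union_left _ (mem_sSet.2 ⟨1, le_rfl, by omega, rfl⟩)
    · simp
    · have hU : ∀ v : V, Sum.inl v ∈ sSet V α ∪ U.image Sum.inl ↔ v ∈ U := by
        intro v; simp
      have hS : ∀ i, 1 ≤ i → i ≤ α → (sV i : Vtx V) ∈ sSet V α ∪ U.image Sum.inl := by
        intro i h1 h2; exact Finset.mem_union_left _ (mem_sSet.2 ⟨i, h1, h2, rfl⟩)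
      have hT : ∀ i, 1 ≤ i → i ≤ α → (tV i : Vtx V) ∉ sSet V α ∪ U.image Sum.inl := by
        intro i h1 h2; simp
      rw [keySum G α hα2 w hw0 hw1 _ U hU hS hT, ← hm, maxCut, hUmax]
  · -- lower bound
    rintro x ⟨S, hs1, ht1, rfl⟩
    have hmc : (0 : ℝ) ≤ (maxCut G : ℝ) := Nat.cast_nonneg _
    by_cases hall : (∀ i, 1 ≤ i → i ≤ α → (sV i : Vtx V) ∈ S)
        ∧ (∀ i, 1 ≤ i → i ≤ α → (tV i : Vtx V) ∉ S)
    · classical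
      set U := Finset.univ.filter (fun v : V => Sum.inl v ∈ S) with hUdef
      have hU : ∀ v : V, Sum.inl v ∈ S ↔ v ∈ U := by intro v; simp [hUdef]
      rw [keySum G α hα2 w hw0 hw1 S U hU hall.1 hall.2, ← hm]
      have hle : ((G.edgeFinset.filter (fun e => (pairFinset e ∩ U).card = 1)).card : ℝ)
          ≤ (maxCut G : ℝ) := by
        exact_mod_cast Finset.le_sup (f := fun U : Finset V =>
          (G.edgeFinset.filter (fun e => (pairFinset e ∩ U).card = 1)).card) (Finset.mem_univ U)
      nlinarith
    · -- some s-vertex outside S or some t-vertex inside S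
      have hbig : (α : ℝ) - 1 ≤ ∑ e ∈ H0 G α, w (splitVal S e) := by
        have hnn : ∀ p ∈ H0 G α, 0 ≤ w (splitVal S p) := by
          intro p hp
          have h := two_mul_splitVal_le S p
          have h4 := H0_card_le G α p hp
          rcases (show splitVal S p = 0 ∨ splitVal S p = 1 ∨ splitVal S p = 2 by omega)
            with h' | h' | h' <;> rw [h'] <;> linarith
        rcases not_and_or.1 hall with h | h
        · push_neg at h
          obtain ⟨j, hj1, hjα, hj⟩ := h
          have hne : (1 : ℕ) ≠ j := fun h' => hj (h' ▸ hs1)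
          have := clique_lb sV (fun i k h => by simpa using h) α 1 j le_rfl (by omega)
            hj1 hjα hne S hs1 hj w hw0 hw1
          refine le_trans this (Finset.sum_le_sum_of_subset_of_nonneg ?_
            (fun p hp _ => hnn p hp))
          intro p hp
          rw [H0]
          exact Finset.mem_union_left _ (Finset.mem_union_left _ (Finset.mem_union_left _ hp))
        · push_neg at h
          obtain ⟨j, hj1, hjα, hj⟩ := h
          have hne : j ≠ 1 := fun h' => ht1 (h' ▸ hj)
          have := clique_lb tV (fun i k h => by simpa using h) α j 1 hj1 hjα le_rfl (by omega)
            hne S hj ht1 w hw0 hw1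
          refine le_trans this (Finset.sum_le_sum_of_subset_of_nonneg ?_
            (fun p hp _ => hnn p hp))
          intro p hp
          rw [H0]
          exact Finset.mem_union_left _ (Finset.mem_union_left _ (Finset.mem_union_right _ hp))
      nlinarith [hw2, hmc]
end

section
/- Let k ≥ 4 and let α > 2k be integers. Let A be a set of α vertices and consider the k-uniform hyperclique on A, i.e., the hypergraph whose hyperedges are all k-element subsets of A. Then for every cut S with 1 ≤ |S ∩ A| ≤ α − 1 (i.e., S separates at least two vertices of A), the number of hyperedges whose split value equals 1 is at least α. Consequently, for any nonnegative weights with w_1 = 1, the cardinality-based cost of any such cut is at least α. -/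
lemma choose_two_le_choose (n : ℕ) : ∀ r, 2 ≤ r → 2 * r ≤ n → n.choose 2 ≤ n.choose r := by
  intro r
  induction r with
  | zero => omega
  | succ r ih =>
    intro h2 hn
    rcases Nat.lt_or_ge r 2 with hr | hr
    · have : r + 1 = 2 := by omega
      rw [this]
    · have hstep : n.choose r ≤ n.choose (r + 1) := by
        apply Nat.choose_le_succ_of_lt_half_left
        have : r + 1 ≤ n / 2 := (Nat.le_div_iff_mul_le (by norm_num)).mpr (by omega)
        omega
      exact le_trans (ih hr (by omega)) hstep
lemma choose_ge_succ (b k : ℕ) (hk : 4 ≤ k) (hb : k + 1 ≤ b) :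
    b + 1 ≤ b.choose (k - 1) := by
  have hb2 : b + 1 ≤ b.choose 2 := by
    rw [Nat.choose_two_right]
    have h2 : (b + 1) * 2 ≤ b * (b - 1) := by nlinarith [Nat.sub_add_cancel (show 1 ≤ b by omega)]
    exact (Nat.le_div_iff_mul_le (by norm_num)).mpr h2
  rcases le_or_gt (2 * (k - 1)) b with h | h
  · exact le_trans hb2 (choose_two_le_choose b (k - 1) (by omega) h)
  · have hsymm : b.choose (b - (k - 1)) = b.choose (k - 1) :=
      Nat.choose_symm (by omega)
    rw [← hsymm]
    exact le_trans hb2 (choose_two_le_choose b (b - (k - 1)) (by omega) (by omega))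

lemma helper {W : Type*} [DecidableEq W] (k : ℕ) (hk : 4 ≤ k)
    (A S : Finset W) (h1 : 1 ≤ (A ∩ S).card) (h2 : k + 1 ≤ (A \ S).card) :
    (A ∩ S).card + (A \ S).card ≤
      ((A.powersetCard k).filter (fun e => splitVal S e = 1)).card := by
  classical
  set T := A ∩ S with hT
  set U := A \ S with hU
  -- key facts about members
  have hmemT : ∀ x ∈ T, x ∈ A ∧ x ∈ S := fun x hx => Finset.mem_inter.1 hx
  have hmemU : ∀ x ∈ U, x ∈ A ∧ x ∉ S := fun x hx => Finset.mem_sdiff.1 hx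
  -- computations for insert x f
  have hcomp : ∀ x ∈ T, ∀ f ∈ U.powersetCard (k - 1),
      (insert x f) ∩ S = {x} ∧ (insert x f) \ S = f := by
    intro x hx f hf
    obtain ⟨hfU, hfcard⟩ := Finset.mem_powersetCard.1 hf
    constructor
    · ext y
      simp only [Finset.mem_inter, Finset.mem_insert, Finset.mem_singleton]
      constructor
      · rintro ⟨hy1 | hy1, hy2⟩
        · exact hy1
        · exact absurd hy2 (hmemU y (hfU hy1)).2
      · rintro rfl; exact ⟨Or.inl rfl, (hmemT _ hx).2⟩
    · ext y
      simp only [Finset.mem_sdiff, Finset.mem_insert]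
      constructor
      · rintro ⟨hy1 | hy1, hy2⟩
        · exact absurd (hy1 ▸ (hmemT x hx).2) hy2
        · exact hy1
      · intro hy; exact ⟨Or.inr hy, (hmemU y (hfU hy)).2⟩
  have hinj : (T ×ˢ U.powersetCard (k - 1)).card ≤
      ((A.powersetCard k).filter (fun e => splitVal S e = 1)).card := by
    apply Finset.card_le_card_of_injOn (fun p => insert p.1 p.2)
    · rintro ⟨x, f⟩ hp
      rw [Finset.mem_coe, Finset.mem_product] at hp
      obtain ⟨hx, hf⟩ := hp
      obtain ⟨hfU, hfcard⟩ := Finset.mem_powersetCard.1 hf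
      obtain ⟨hiS, hdS⟩ := hcomp x hx f hf
      have hxf : x ∉ f := fun hxf => (hmemU x (hfU hxf)).2 (hmemT x hx).2
      rw [Finset.mem_coe, Finset.mem_filter, Finset.mem_powersetCard]
      refine ⟨⟨?_, ?_⟩, ?_⟩
      · intro y hy
        rcases Finset.mem_insert.1 hy with rfl | hy
        · exact (hmemT y hx).1
        · exact (hmemU y (hfU hy)).1
      · rw [Finset.card_insert_of_notMem hxf, hfcard]; omega
      · show min _ _ = 1
        rw [hiS, hdS, Finset.card_singleton, hfcard]
        omega
    · rintro ⟨x, f⟩ hp ⟨x', f'⟩ hp' heq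
      rw [Finset.mem_coe, Finset.mem_product] at hp hp'
      obtain ⟨hiS, hdS⟩ := hcomp x hp.1 f hp.2
      obtain ⟨hiS', hdS'⟩ := hcomp x' hp'.1 f' hp'.2
      simp only at heq
      have hx : ({x} : Finset W) = {x'} := by rw [← hiS, ← hiS', heq]
      have hf : f = f' := by rw [← hdS, ← hdS', heq]
      have := Finset.singleton_injective hx
      simp [this, hf]
  rw [Finset.card_product, Finset.card_powersetCard] at hinj
  refine le_trans ?_ hinj
  have hchoose : U.card + 1 ≤ U.card.choose (k - 1) := choose_ge_succ U.card k hk h2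
  nlinarith

theorem stmt6 {W : Type*} [DecidableEq W]
    (k α : ℕ) (hk : 4 ≤ k) (hα : 2 * k < α)
    (A : Finset W) (hA : A.card = α)
    (S : Finset W) (h1 : 1 ≤ (A ∩ S).card) (h2 : (A ∩ S).card ≤ α - 1)
    (w : ℕ → ℝ) (hw : ∀ n, 0 ≤ w n) (hw1 : w 1 = 1) :
    α ≤ ((A.powersetCard k).filter (fun e => splitVal S e = 1)).card ∧
      (α : ℝ) ≤ ∑ e ∈ A.powersetCard k, w (splitVal S e) := by
  classical
  have hcards : (A ∩ S).card + (A \ S).card = α := by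
    rw [Finset.card_inter_add_card_sdiff, hA]
  have hfirst : α ≤ ((A.powersetCard k).filter (fun e => splitVal S e = 1)).card := by
    rcases le_or_gt (k + 1) ((A \ S).card) with hc | hc
    · have := helper k hk A S h1 hc
      omega
    · -- apply helper to A \ S
      have hAS1 : A ∩ (A \ S) = A \ S := Finset.inter_eq_right.mpr (Finset.sdiff_subset)
      have hAS2 : A \ (A \ S) = A ∩ S := Finset.sdiff_sdiff_self_left A S
      have hh1 : 1 ≤ (A ∩ (A \ S)).card := by rw [hAS1]; omega
      have hh2 : k + 1 ≤ (A \ (A \ S)).card := by rw [hAS2]; omega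
      have hhelp := helper k hk A (A \ S) hh1 hh2
      rw [hAS1, hAS2] at hhelp
      have hfeq : (A.powersetCard k).filter (fun e => splitVal (A \ S) e = 1) =
          (A.powersetCard k).filter (fun e => splitVal S e = 1) := by
        apply Finset.filter_congr
        intro e he
        obtain ⟨heA, -⟩ := Finset.mem_powersetCard.1 he
        have e1 : e ∩ (A \ S) = e \ S := by
          ext y
          simp only [Finset.mem_inter, Finset.mem_sdiff]
          constructor
          · rintro ⟨hy, -, hy2⟩; exact ⟨hy, hy2⟩
          · rintro ⟨hy, hy2⟩; exact ⟨hy, heA hy, hy2⟩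
        have e2 : e \ (A \ S) = e ∩ S := by
          ext y
          simp only [Finset.mem_inter, Finset.mem_sdiff, not_and, not_not]
          constructor
          · rintro ⟨hy, hy2⟩; exact ⟨hy, hy2 (heA hy)⟩
          · rintro ⟨hy, hy2⟩; exact ⟨hy, fun _ => hy2⟩
        simp only [splitVal, e1, e2, min_comm]
      rw [hfeq] at hhelp
      omega
  refine ⟨hfirst, ?_⟩
  have hsum : ((((A.powersetCard k).filter (fun e => splitVal S e = 1)).card : ℝ)) ≤
      ∑ e ∈ A.powersetCard k, w (splitVal S e) := by
    calc ((((A.powersetCard k).filter (fun e => splitVal S e = 1)).card : ℝ))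
        = ∑ e ∈ (A.powersetCard k).filter (fun e => splitVal S e = 1), w (splitVal S e) := by
          rw [Finset.sum_congr rfl (fun e he => by
            rw [(Finset.mem_filter.1 he).2, hw1])]
          simp
      _ ≤ ∑ e ∈ A.powersetCard k, w (splitVal S e) := by
          apply Finset.sum_le_sum_of_subset_of_nonneg (Finset.filter_subset _ _)
          intro i _ _
          exact hw _
  refine le_trans ?_ hsum
  exact_mod_cast hfirst
end

section
/- Let k ≥ 4, let G = (V, E) be a finite simple graph with m edges, let α > 2k, and let w_2 ≥ 0 (with w_0 = 0, w_1 = 1). Construct the k-uniform hypergraph H whose vertex set is V together with new vertices s_1, …, s_α and t_1, …, t_α, and whose hyperedges are: all k-element subsets of {s_1, …, s_α}, all k-element subsets of {t_1, …, t_α}, and for each edge {x, y} ∈ E the two hyperedges {s_1, …, s_{k−2}, x, y} and {t_1, …, t_{k−2}, x, y}. Then for every cut S* with {s_1, …, s_α} ⊆ S* and {t_1, …, t_α} disjoint from S*, the cardinality-based cost of S* equals w_2·(m − c) + 2c, where c is the number of edges of G with exactly one endpoint in S*. -/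
/-- The `k`-uniform hyperedge family built from `G`: all `k`-element subsets of the
two cliques `{s_1,…,s_α}` and `{t_1,…,t_α}`, and for each edge `{x,y}` of `G` the
two hyperedges `{s_1,…,s_{k-2},x,y}` and `{t_1,…,t_{k-2},x,y}`. -/
def H7 {V : Type*} [Fintype V] [DecidableEq V] (G : SimpleGraph V) [DecidableRel G.Adj]
    (α k : ℕ) : Finset (Finset (Vtx V)) :=
  (sSet V α).powersetCard k ∪ (tSet V α).powersetCard k ∪
    G.edgeFinset.image (fun e => sSet V (k - 2) ∪ edgeImg e) ∪
    G.edgeFinset.image (fun e => tSet V (k - 2) ∪ edgeImg e)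

section Helpers
variable {V : Type*} [DecidableEq V]

lemma sV_inj_s7 : Function.Injective (sV (V := V)) := fun a b h => by
  simpa [sV] using h

lemma tV_inj_s7 : Function.Injective (tV (V := V)) := fun a b h => by
  simpa [tV] using h

lemma sSet_card (j : ℕ) : (sSet V j).card = j := by
  rw [sSet, Finset.card_image_of_injective _ sV_inj_s7, Nat.card_Icc]; omega

lemma tSet_card (j : ℕ) : (tSet V j).card = j := by
  rw [tSet, Finset.card_image_of_injective _ tV_inj_s7, Nat.card_Icc]; omega

lemma mem_sSet_inr {j : ℕ} {x : Vtx V} (h : x ∈ sSet V j) : ∃ i, x = sV i := by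
  simp only [sSet, Finset.mem_image] at h; obtain ⟨i, _, rfl⟩ := h; exact ⟨i, rfl⟩

lemma mem_tSet_inr {j : ℕ} {x : Vtx V} (h : x ∈ tSet V j) : ∃ i, x = tV i := by
  simp only [tSet, Finset.mem_image] at h; obtain ⟨i, _, rfl⟩ := h; exact ⟨i, rfl⟩

lemma sSet_mono {i j : ℕ} (h : i ≤ j) : sSet V i ⊆ sSet V j :=
  Finset.image_subset_image (Finset.Icc_subset_Icc_right h)

lemma tSet_mono {i j : ℕ} (h : i ≤ j) : tSet V i ⊆ tSet V j :=
  Finset.image_subset_image (Finset.Icc_subset_Icc_right h)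

lemma mem_pairFinset {e : Sym2 V} {x : V} : x ∈ pairFinset e ↔ x ∈ e := by
  induction e using Sym2.ind with
  | _ a b => simp [pairFinset, Sym2.mem_iff]

lemma edgeImg_nonempty (e : Sym2 V) : ∃ x, Sum.inl x ∈ edgeImg e := by
  induction e using Sym2.ind with
  | _ a b => exact ⟨a, by simp [edgeImg, mem_pairFinset]⟩

lemma mem_edgeImg_inl {e : Sym2 V} {x : Vtx V} (h : x ∈ edgeImg e) : ∃ y, x = Sum.inl y := by
  simp only [edgeImg, Finset.mem_image] at h; obtain ⟨y, _, rfl⟩ := h; exact ⟨y, rfl⟩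

lemma edgeImg_card {G : SimpleGraph V} {e : Sym2 V} (he : e ∈ G.edgeSet) :
    (edgeImg e).card = 2 := by
  rw [edgeImg, Finset.card_image_of_injective _ Sum.inl_injective]
  induction e using Sym2.ind with
  | _ a b =>
    have hab : a ≠ b := G.ne_of_adj (G.mem_edgeSet.mp he)
    simp only [pairFinset, Sym2.lift_mk]
    rw [Finset.card_pair hab]

lemma disjoint_sSet_edgeImg (j : ℕ) (e : Sym2 V) : Disjoint (sSet V j) (edgeImg e) := by
  rw [Finset.disjoint_left]
  intro x hx hx'
  obtain ⟨i, rfl⟩ := mem_sSet_inr hx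
  obtain ⟨y, hy⟩ := mem_edgeImg_inl hx'
  simp [sV] at hy

lemma disjoint_tSet_edgeImg (j : ℕ) (e : Sym2 V) : Disjoint (tSet V j) (edgeImg e) := by
  rw [Finset.disjoint_left]
  intro x hx hx'
  obtain ⟨i, rfl⟩ := mem_tSet_inr hx
  obtain ⟨y, hy⟩ := mem_edgeImg_inl hx'
  simp [tV] at hy

end Helpers

section Helpers2
variable {V : Type*} [DecidableEq V]

lemma union_cancel {γ : Type*} [DecidableEq γ] {A B B' : Finset γ}
    (hB : Disjoint A B) (hB' : Disjoint A B') (h : A ∪ B = A ∪ B') : B = B' := by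
  ext x
  constructor <;> intro hx
  · rcases Finset.mem_union.mp (h ▸ Finset.mem_union_right A hx) with h' | h'
    · exact absurd hx (Finset.disjoint_left.mp hB h')
    · exact h'
  · rcases Finset.mem_union.mp (h.symm ▸ Finset.mem_union_right A hx) with h' | h'
    · exact absurd hx (Finset.disjoint_left.mp hB' h')
    · exact h'

lemma split_s_side (k : ℕ) (hk : 4 ≤ k) (S : Finset (Vtx V))
    (hsS : sSet V (k - 2) ⊆ S) (e : Sym2 V) (he2 : (edgeImg e).card = 2) :
    splitVal S (sSet V (k - 2) ∪ edgeImg e) = 2 - ((edgeImg e).filter (· ∈ S)).card := by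
  have hdisj := disjoint_sSet_edgeImg (V := V) (k - 2) e
  have h1 : (sSet V (k - 2) ∪ edgeImg e) ∩ S = sSet V (k - 2) ∪ (edgeImg e ∩ S) := by
    rw [Finset.union_inter_distrib_right, Finset.inter_eq_left.mpr hsS]
  have h2 : (sSet V (k - 2) ∪ edgeImg e) \ S = edgeImg e \ S := by
    rw [Finset.union_sdiff_distrib, Finset.sdiff_eq_empty_iff_subset.mpr hsS,
      Finset.empty_union]
  have hkey : (edgeImg e ∩ S).card + (edgeImg e \ S).card = 2 := by
    rw [Finset.card_inter_add_card_sdiff, he2]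
  have hcard1 : ((sSet V (k - 2) ∪ edgeImg e) ∩ S).card = (k - 2) + (edgeImg e ∩ S).card := by
    rw [h1, Finset.card_union_of_disjoint (hdisj.mono_right Finset.inter_subset_left),
      sSet_card]
  rw [splitVal, hcard1, h2, Finset.filter_mem_eq_inter]
  omega

lemma split_t_side (k : ℕ) (hk : 4 ≤ k) (S : Finset (Vtx V))
    (htS : ∀ v ∈ tSet V (k - 2), v ∉ S) (e : Sym2 V) (he2 : (edgeImg e).card = 2) :
    splitVal S (tSet V (k - 2) ∪ edgeImg e) = ((edgeImg e).filter (· ∈ S)).card := by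
  have hdisjS : Disjoint (tSet V (k - 2)) S := Finset.disjoint_left.mpr htS
  have hdisj := disjoint_tSet_edgeImg (V := V) (k - 2) e
  have h1 : (tSet V (k - 2) ∪ edgeImg e) ∩ S = edgeImg e ∩ S := by
    rw [Finset.union_inter_distrib_right,
      Finset.disjoint_iff_inter_eq_empty.mp hdisjS, Finset.empty_union]
  have h2 : (tSet V (k - 2) ∪ edgeImg e) \ S = tSet V (k - 2) ∪ (edgeImg e \ S) := by
    rw [Finset.union_sdiff_distrib, Finset.sdiff_eq_self_of_disjoint hdisjS]
  have hkey : (edgeImg e ∩ S).card + (edgeImg e \ S).card = 2 := by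
    rw [Finset.card_inter_add_card_sdiff, he2]
  have hcard2 : ((tSet V (k - 2) ∪ edgeImg e) \ S).card
      = (k - 2) + (edgeImg e \ S).card := by
    rw [h2, Finset.card_union_of_disjoint (hdisj.mono_right (Finset.sdiff_subset)),
      tSet_card]
  rw [splitVal, h1, hcard2, Finset.filter_mem_eq_inter]
  omega

end Helpers2


theorem stmt7 {V : Type*} [Fintype V] [DecidableEq V]
    (k : ℕ) (hk : 4 ≤ k)
    (G : SimpleGraph V) [DecidableRel G.Adj]
    (m : ℕ) (hm : m = G.edgeFinset.card)
    (α : ℕ) (hα : 2 * k < α)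
    (w : ℕ → ℝ) (hw0 : w 0 = 0) (hw1 : w 1 = 1) (hw2 : 0 ≤ w 2)
    (S : Finset (Vtx V))
    (hS : sSet V α ⊆ S) (hT : ∀ v ∈ tSet V α, v ∉ S)
    (c : ℕ)
    (hc : c = (G.edgeFinset.filter
      (fun e => ((edgeImg e).filter (· ∈ S)).card = 1)).card) :
    ∑ e ∈ H7 G α k, w (splitVal S e) = w 2 * ((m : ℝ) - c) + 2 * c := by
  classical
  have hsS : sSet V (k - 2) ⊆ S := (sSet_mono (by omega)).trans hS
  have htS : ∀ v ∈ tSet V (k - 2), v ∉ S := fun v hv =>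
    hT v (tSet_mono (by omega : k - 2 ≤ α) hv)
  -- disjointness of the four parts
  have hd12 : Disjoint ((sSet V α).powersetCard k) ((tSet V α).powersetCard k) := by
    rw [Finset.disjoint_left]
    intro A h1 h2
    rw [Finset.mem_powersetCard] at h1 h2
    have hA : A.Nonempty := by rw [← Finset.card_pos, h1.2]; omega
    obtain ⟨x, hx⟩ := hA
    obtain ⟨i, rfl⟩ := mem_sSet_inr (h1.1 hx)
    obtain ⟨j, hj⟩ := mem_tSet_inr (h2.1 hx)
    simp [sV, tV] at hj
  have hd3 : Disjoint ((sSet V α).powersetCard k ∪ (tSet V α).powersetCard k)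
      (G.edgeFinset.image (fun e => sSet V (k - 2) ∪ edgeImg e)) := by
    rw [Finset.disjoint_left]
    intro A h12 h3
    obtain ⟨e, he, rfl⟩ := Finset.mem_image.mp h3
    obtain ⟨x, hx⟩ := edgeImg_nonempty e
    have hx' : Sum.inl x ∈ sSet V (k - 2) ∪ edgeImg e := Finset.mem_union_right _ hx
    rcases Finset.mem_union.mp h12 with h | h
    · rw [Finset.mem_powersetCard] at h
      obtain ⟨i, hi⟩ := mem_sSet_inr (h.1 hx'); simp [sV] at hi
    · rw [Finset.mem_powersetCard] at h
      obtain ⟨i, hi⟩ := mem_tSet_inr (h.1 hx'); simp [tV] at hi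
  have hd4 : Disjoint ((sSet V α).powersetCard k ∪ (tSet V α).powersetCard k ∪
      G.edgeFinset.image (fun e => sSet V (k - 2) ∪ edgeImg e))
      (G.edgeFinset.image (fun e => tSet V (k - 2) ∪ edgeImg e)) := by
    rw [Finset.disjoint_left]
    intro A h123 h4
    obtain ⟨e, he, rfl⟩ := Finset.mem_image.mp h4
    obtain ⟨x, hx⟩ := edgeImg_nonempty e
    have hx' : Sum.inl x ∈ tSet V (k - 2) ∪ edgeImg e := Finset.mem_union_right _ hx
    rcases Finset.mem_union.mp h123 with h12 | h3
    · rcases Finset.mem_union.mp h12 with h | h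
      · rw [Finset.mem_powersetCard] at h
        obtain ⟨i, hi⟩ := mem_sSet_inr (h.1 hx'); simp [sV] at hi
      · rw [Finset.mem_powersetCard] at h
        obtain ⟨i, hi⟩ := mem_tSet_inr (h.1 hx'); simp [tV] at hi
    · obtain ⟨e', he', hEq⟩ := Finset.mem_image.mp h3
      have h1 : sV 1 ∈ sSet V (k - 2) := by
        rw [sSet]
        exact Finset.mem_image_of_mem _ (by rw [Finset.mem_Icc]; omega)
      have h1' : sV (V := V) 1 ∈ tSet V (k - 2) ∪ edgeImg e :=
        hEq ▸ Finset.mem_union_left _ h1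
      rcases Finset.mem_union.mp h1' with h | h
      · obtain ⟨i, hi⟩ := mem_tSet_inr h; simp [sV, tV] at hi
      · obtain ⟨y, hy⟩ := mem_edgeImg_inl h; simp [sV] at hy
  -- split the sum
  rw [H7, Finset.sum_union hd4, Finset.sum_union hd3, Finset.sum_union hd12]
  -- the two clique parts vanish
  have hz1 : ∑ e ∈ (sSet V α).powersetCard k, w (splitVal S e) = 0 := by
    refine Finset.sum_eq_zero fun e he => ?_
    rw [Finset.mem_powersetCard] at he
    have h0 : e \ S = ∅ := Finset.sdiff_eq_empty_iff_subset.mpr (he.1.trans hS)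
    rw [splitVal, h0]
    simpa using hw0
  have hz2 : ∑ e ∈ (tSet V α).powersetCard k, w (splitVal S e) = 0 := by
    refine Finset.sum_eq_zero fun e he => ?_
    rw [Finset.mem_powersetCard] at he
    have h0 : e ∩ S = ∅ := by
      rw [Finset.eq_empty_iff_forall_notMem]
      intro x hx
      rw [Finset.mem_inter] at hx
      exact hT x (he.1 hx.1) hx.2
    rw [splitVal, h0]
    simpa using hw0
  rw [hz1, hz2]
  -- rewrite the two image sums as sums over edges
  have hinj_s : ∀ e ∈ G.edgeFinset, ∀ e' ∈ G.edgeFinset,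
      sSet V (k - 2) ∪ edgeImg e = sSet V (k - 2) ∪ edgeImg e' → e = e' := by
    intro e _ e' _ h
    exact edgeImg_injective
      (union_cancel (disjoint_sSet_edgeImg _ _) (disjoint_sSet_edgeImg _ _) h)
  have hinj_t : ∀ e ∈ G.edgeFinset, ∀ e' ∈ G.edgeFinset,
      tSet V (k - 2) ∪ edgeImg e = tSet V (k - 2) ∪ edgeImg e' → e = e' := by
    intro e _ e' _ h
    exact edgeImg_injective
      (union_cancel (disjoint_tSet_edgeImg _ _) (disjoint_tSet_edgeImg _ _) h)
  rw [Finset.sum_image hinj_s, Finset.sum_image hinj_t]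
  have hcard2 : ∀ e ∈ G.edgeFinset, (edgeImg e).card = 2 := fun e he =>
    edgeImg_card (SimpleGraph.mem_edgeFinset.mp he)
  have hstep : ∀ e ∈ G.edgeFinset,
      w (splitVal S (sSet V (k - 2) ∪ edgeImg e))
        + w (splitVal S (tSet V (k - 2) ∪ edgeImg e))
      = if ((edgeImg e).filter (· ∈ S)).card = 1 then (2 : ℝ) else w 2 := by
    intro e he
    rw [split_s_side k hk S hsS e (hcard2 e he), split_t_side k hk S htS e (hcard2 e he)]
    have hle : ((edgeImg e).filter (· ∈ S)).card ≤ 2 := by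
      rw [← hcard2 e he]; exact Finset.card_filter_le _ _
    interval_cases h : ((edgeImg e).filter (· ∈ S)).card
    · simpa using hw0
    · rw [hw1]; norm_num
    · simpa using hw0
  rw [zero_add, zero_add, ← Finset.sum_add_distrib, Finset.sum_congr rfl hstep,
    Finset.sum_ite, Finset.sum_const, Finset.sum_const]
  have hcm : c ≤ m := by
    rw [hc, hm]; exact Finset.card_filter_le _ _
  have hneg : (G.edgeFinset.filter
      (fun e => ¬ ((edgeImg e).filter (· ∈ S)).card = 1)).card = m - c := by
    have := Finset.card_filter_add_card_filter_not (s := G.edgeFinset)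
      (p := fun e => ((edgeImg e).filter (· ∈ S)).card = 1)
    omega
  rw [← hc, hneg, nsmul_eq_mul, nsmul_eq_mul, Nat.cast_sub hcm]
  ring
end

section
/- Let k ≥ 4 and let i be an integer with 2 ≤ i ≤ ⌊k/2⌋ − 1, and let nonnegative weights w_{i−1}, w_i, w_{i+1} be given. Consider two k-element hyperedges e_1 = {s_1, …, s_{i−1}, x, y, t_1, …, t_{k−i−1}} and e_2 = {s_1, …, s_{k−i−1}, x, y, t_1, …, t_{i−1}} (all s-vertices, t-vertices, x and y distinct), and a cut S such that all vertices s_1, …, s_{k−i−1} ∈ S and t_1, …, t_{k−i−1} ∉ S. Then w_{split value of e_1} + w_{split value of e_2} equals w_{i−1} + w_{i+1} if x and y lie on the same side of the cut, and equals 2·w_i if x and y lie on opposite sides. -/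
set_option maxHeartbeats 1000000 in
theorem stmt9 {W : Type*} [DecidableEq W]
    (k i : ℕ) (hk : 4 ≤ k) (hi1 : 2 ≤ i) (hi2 : i ≤ k / 2 - 1)
    (w : ℕ → ℝ) (hw : ∀ n, 0 ≤ w n)
    (s t : ℕ → W) (x y : W)
    (hs : Set.InjOn s ↑(Finset.Icc 1 (k - i - 1)))
    (ht : Set.InjOn t ↑(Finset.Icc 1 (k - i - 1)))
    (hst : ∀ p ∈ Finset.Icc 1 (k - i - 1), ∀ q ∈ Finset.Icc 1 (k - i - 1), s p ≠ t q)
    (hsxy : ∀ p ∈ Finset.Icc 1 (k - i - 1), s p ≠ x ∧ s p ≠ y ∧ t p ≠ x ∧ t p ≠ y)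
    (hxy : x ≠ y)
    (S : Finset W)
    (hsS : ∀ p ∈ Finset.Icc 1 (k - i - 1), s p ∈ S)
    (htS : ∀ p ∈ Finset.Icc 1 (k - i - 1), t p ∉ S) :
    ((x ∈ S ↔ y ∈ S) →
      w (splitVal S ((Finset.Icc 1 (i - 1)).image s ∪ {x, y} ∪
          (Finset.Icc 1 (k - i - 1)).image t)) +
        w (splitVal S ((Finset.Icc 1 (k - i - 1)).image s ∪ {x, y} ∪
          (Finset.Icc 1 (i - 1)).image t)) = w (i - 1) + w (i + 1)) ∧
    (¬(x ∈ S ↔ y ∈ S) →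
      w (splitVal S ((Finset.Icc 1 (i - 1)).image s ∪ {x, y} ∪
          (Finset.Icc 1 (k - i - 1)).image t)) +
        w (splitVal S ((Finset.Icc 1 (k - i - 1)).image s ∪ {x, y} ∪
          (Finset.Icc 1 (i - 1)).image t)) = 2 * w i) := by
  -- abbreviations
  set m := k - i - 1 with hm
  have him : i - 1 ≤ m := by omega
  have hi1m : i + 1 ≤ m := by omega
  have hsub : Finset.Icc 1 (i - 1) ⊆ Finset.Icc 1 m := by
    intro p hp; simp only [Finset.mem_Icc] at *; omega
  -- membership facts
  have hxs : x ∉ (Finset.Icc 1 m).image s := by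
    simp only [Finset.mem_image, not_exists]
    rintro p ⟨hp, h⟩; exact (hsxy p hp).1 h
  have hys : y ∉ (Finset.Icc 1 m).image s := by
    simp only [Finset.mem_image, not_exists]
    rintro p ⟨hp, h⟩; exact (hsxy p hp).2.1 h
  have hxt : x ∉ (Finset.Icc 1 m).image t := by
    simp only [Finset.mem_image, not_exists]
    rintro p ⟨hp, h⟩; exact (hsxy p hp).2.2.1 h
  have hyt : y ∉ (Finset.Icc 1 m).image t := by
    simp only [Finset.mem_image, not_exists]
    rintro p ⟨hp, h⟩; exact (hsxy p hp).2.2.2 h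
  have hsubs : (Finset.Icc 1 (i - 1)).image s ⊆ (Finset.Icc 1 m).image s :=
    Finset.image_subset_image hsub
  have hsubt : (Finset.Icc 1 (i - 1)).image t ⊆ (Finset.Icc 1 m).image t :=
    Finset.image_subset_image hsub
  have hSs : (Finset.Icc 1 m).image s ⊆ S := by
    intro a ha
    obtain ⟨p, hp, rfl⟩ := Finset.mem_image.mp ha
    exact hsS p hp
  have hSt : ∀ b ∈ (Finset.Icc 1 m).image t, b ∉ S := by
    intro b hb
    obtain ⟨p, hp, rfl⟩ := Finset.mem_image.mp hb
    exact htS p hp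
  -- cardinalities
  have hcard1 : ((Finset.Icc 1 (i - 1)).image s).card = i - 1 := by
    rw [Finset.card_image_of_injOn (hs.mono (by exact_mod_cast hsub))]
    simp [Nat.card_Icc]
  have hcard2 : ((Finset.Icc 1 m).image s).card = m := by
    rw [Finset.card_image_of_injOn hs]
    simp [Nat.card_Icc]
  have hcard3 : ((Finset.Icc 1 m).image t).card = m := by
    rw [Finset.card_image_of_injOn ht]
    simp [Nat.card_Icc]
  have hcard4 : ((Finset.Icc 1 (i - 1)).image t).card = i - 1 := by
    rw [Finset.card_image_of_injOn (ht.mono (by exact_mod_cast hsub))]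
    simp [Nat.card_Icc]
  -- key lemma
  have key : ∀ (A B : Finset W), A ⊆ S → (∀ b ∈ B, b ∉ S) → x ∉ A → y ∉ A → x ∉ B → y ∉ B →
      splitVal S (A ∪ {x, y} ∪ B) =
        min (A.card + (({x, y} : Finset W) ∩ S).card)
            (B.card + (({x, y} : Finset W) \ S).card) := by
    intro A B hAS hBS hxA hyA hxB hyB
    have h1 : (A ∪ {x, y} ∪ B) ∩ S = A ∪ (({x, y} : Finset W) ∩ S) := by
      ext a
      simp only [Finset.mem_inter, Finset.mem_union, Finset.mem_insert,
        Finset.mem_singleton]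
      have h1 := @hAS a
      have h2 := hBS a
      constructor
      · rintro ⟨(h | h) | h, haS⟩ <;> tauto
      · rintro (h | ⟨h, haS⟩) <;> tauto
    have h2 : (A ∪ {x, y} ∪ B) \ S = B ∪ (({x, y} : Finset W) \ S) := by
      ext a
      simp only [Finset.mem_sdiff, Finset.mem_union, Finset.mem_insert,
        Finset.mem_singleton]
      have h1 := @hAS a
      have h2 := hBS a
      constructor
      · rintro ⟨(h | h) | h, haS⟩ <;> tauto
      · rintro (h | ⟨h, haS⟩) <;> tauto
    have d1 : Disjoint A (({x, y} : Finset W) ∩ S) := by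
      rw [Finset.disjoint_left]
      intro a haA ha
      rcases Finset.mem_insert.mp (Finset.mem_inter.mp ha).1 with rfl | h
      · exact hxA haA
      · rw [Finset.mem_singleton] at h; subst h; exact hyA haA
    have d2 : Disjoint B (({x, y} : Finset W) \ S) := by
      rw [Finset.disjoint_left]
      intro a haB ha
      rcases Finset.mem_insert.mp (Finset.mem_sdiff.mp ha).1 with rfl | h
      · exact hxB haB
      · rw [Finset.mem_singleton] at h; subst h; exact hyB haB
    rw [splitVal, h1, h2, Finset.card_union_of_disjoint d1, Finset.card_union_of_disjoint d2]
  have k1 := key _ _ (hsubs.trans hSs) hSt (fun h => hxs (hsubs h)) (fun h => hys (hsubs h)) hxt hyt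
  have k2 := key _ _ hSs (fun b hb h => hSt b (hsubt hb) h) hxs hys
    (fun h => hxt (hsubt h)) (fun h => hyt (hsubt h))
  rw [hcard1, hcard3] at k1
  rw [hcard2, hcard4] at k2
  constructor
  · intro hiff
    by_cases hx : x ∈ S
    · have hy : y ∈ S := hiff.mp hx
      have e1 : ({x, y} : Finset W) ∩ S = {x, y} := by
        ext a
        simp only [Finset.mem_inter, Finset.mem_insert, Finset.mem_singleton]
        constructor
        · tauto
        · rintro (rfl | rfl) <;> tauto
      have e2 : ({x, y} : Finset W) \ S = ∅ := by
        ext a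
        simp only [Finset.mem_sdiff, Finset.mem_insert, Finset.mem_singleton,
          Finset.notMem_empty, iff_false, not_and]
        rintro (rfl | rfl) <;> tauto
      have c1 : (({x, y} : Finset W) ∩ S).card = 2 := by
        rw [e1, Finset.card_insert_of_notMem (by simpa using hxy), Finset.card_singleton]
      have c2 : (({x, y} : Finset W) \ S).card = 0 := by rw [e2]; rfl
      rw [c1, c2] at k1 k2
      rw [k1, k2, show min (i - 1 + 2) (m + 0) = i + 1 by omega,
        show min (m + 2) (i - 1 + 0) = i - 1 by omega]
      ring
    · have hy : y ∉ S := fun h => hx (hiff.mpr h)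
      have e1 : ({x, y} : Finset W) ∩ S = ∅ := by
        ext a
        simp only [Finset.mem_inter, Finset.mem_insert, Finset.mem_singleton,
          Finset.notMem_empty, iff_false, not_and]
        rintro (rfl | rfl) <;> tauto
      have e2 : ({x, y} : Finset W) \ S = {x, y} := by
        ext a
        simp only [Finset.mem_sdiff, Finset.mem_insert, Finset.mem_singleton]
        constructor
        · tauto
        · rintro (rfl | rfl) <;> tauto
      have c1 : (({x, y} : Finset W) ∩ S).card = 0 := by rw [e1]; rfl
      have c2 : (({x, y} : Finset W) \ S).card = 2 := by
        rw [e2, Finset.card_insert_of_notMem (by simpa using hxy), Finset.card_singleton]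
      rw [c1, c2] at k1 k2
      rw [k1, k2, show min (i - 1 + 0) (m + 2) = i - 1 by omega,
        show min (m + 0) (i - 1 + 2) = i + 1 by omega]
  · intro hniff
    have hc : (x ∈ S ∧ y ∉ S) ∨ (x ∉ S ∧ y ∈ S) := by
      by_cases hx : x ∈ S
      · by_cases hy : y ∈ S
        · exact absurd (iff_of_true hx hy) hniff
        · exact Or.inl ⟨hx, hy⟩
      · by_cases hy : y ∈ S
        · exact Or.inr ⟨hx, hy⟩
        · exact absurd (iff_of_false hx hy) hniff
    have c1 : (({x, y} : Finset W) ∩ S).card = 1 := by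
      rcases hc with ⟨hx, hy⟩ | ⟨hx, hy⟩
      · have h : ({x, y} : Finset W) ∩ S = {x} := by
          ext a
          simp only [Finset.mem_inter, Finset.mem_insert, Finset.mem_singleton]
          constructor
          · rintro ⟨rfl | rfl, h⟩
            · rfl
            · exact absurd h hy
          · rintro rfl; exact ⟨Or.inl rfl, hx⟩
        rw [h, Finset.card_singleton]
      · have h : ({x, y} : Finset W) ∩ S = {y} := by
          ext a
          simp only [Finset.mem_inter, Finset.mem_insert, Finset.mem_singleton]
          constructor
          · rintro ⟨rfl | rfl, h⟩
            · exact absurd h hx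
            · rfl
          · rintro rfl; exact ⟨Or.inr rfl, hy⟩
        rw [h, Finset.card_singleton]
    have c2 : (({x, y} : Finset W) \ S).card = 1 := by
      rcases hc with ⟨hx, hy⟩ | ⟨hx, hy⟩
      · have h : ({x, y} : Finset W) \ S = {y} := by
          ext a
          simp only [Finset.mem_sdiff, Finset.mem_insert, Finset.mem_singleton]
          constructor
          · rintro ⟨rfl | rfl, h⟩
            · exact absurd hx h
            · rfl
          · rintro rfl; exact ⟨Or.inr rfl, hy⟩
        rw [h, Finset.card_singleton]
      · have h : ({x, y} : Finset W) \ S = {x} := by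
          ext a
          simp only [Finset.mem_sdiff, Finset.mem_insert, Finset.mem_singleton]
          constructor
          · rintro ⟨rfl | rfl, h⟩
            · rfl
            · exact absurd hy h
          · rintro rfl; exact ⟨Or.inl rfl, hx⟩
        rw [h, Finset.card_singleton]
    rw [c1, c2] at k1 k2
    rw [k1, k2, show min (i - 1 + 1) (m + 1) = i by omega,
      show min (m + 1) (i - 1 + 1) = i by omega]
    ring
end
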